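/- Inversion of the correlation-function map: let (f_m)_{m≥0} be a family of Borel functions f_m : Γ_m → ℝ with |f_m(z_m)| ≤ A ∏_{j=1}^m h_β(p_j) for fixed A, β > 0, and define ρ_n(z_n) = Σ_{k=0}^∞ (1/k!) ∫_{Γ_k(z_n)} f_{n+k}(z_n, z_{n+1}, …, z_{n+k}) dz_{n+1}⋯dz_{n+k}. Then for every n ≥ 0 and every z_n ∈ Γ_n the series Σ_{k=0}^∞ ((−1)^k/k!) ∫_{Γ_k(z_n)} ρ_{n+k}(z_n, z_{n+1}, …, z_{n+k}) dz_{n+1}⋯dz_{n+k} converges absolutely and equals f_n(z_n). -/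

import Mathlib

open MeasureTheory
open scoped ENNReal

noncomputable section

/-- Position/momentum space `ℝ³`. -/
abbrev R3 : Type := EuclideanSpace ℝ (Fin 3)

/-- The `n`-particle hard-sphere phase space `Γ_n`. -/
def HSGamma (a : ℝ) (Λ : Set R3) (n : ℕ) : Set (Fin n → R3 × R3) :=
  {z | (∀ i, (z i).1 ∈ Λ) ∧ (∀ i, ∀ q ∈ frontier Λ, a / 2 ≤ dist (z i).1 q) ∧
       (∀ i j, i ≠ j → a ≤ dist (z i).1 (z j).1)}

/-- `Γ_k(z_n) = {y : (z_n, y) ∈ Γ_{n+k}}`. -/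
def gammaExt (a : ℝ) (Λ : Set R3) (n k : ℕ) (z : Fin n → R3 × R3) :
    Set (Fin k → R3 × R3) :=
  {y | Fin.append z y ∈ HSGamma a Λ (n + k)}

/-- The normalized Maxwellian `h_β(p) = (β/(2π))^{3/2} e^{−β|p|²/2}`. -/
noncomputable def maxw (β : ℝ) (p : R3) : ℝ :=
  (β / (2 * Real.pi)) ^ ((3 : ℝ) / 2) * Real.exp (-β * ‖p‖ ^ 2 / 2)

/-- The grand canonical correlation functions
`ρ_n(z_n) = Σ_k (1/k!) ∫_{Γ_k(z_n)} f_{n+k}(z_n, y) dy`. -/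
noncomputable def corrGC (a : ℝ) (Λ : Set R3)
    (f : (m : ℕ) → (Fin m → R3 × R3) → ℝ) (n : ℕ) (z : Fin n → R3 × R3) : ℝ :=
  ∑' k : ℕ, (k.factorial : ℝ)⁻¹ *
    ∫ y in gammaExt a Λ n k z, f (n + k) (Fin.append z y)

abbrev EE : Type := R3 × R3

instance : SigmaFinite (volume : Measure EE) := inferInstance
instance (m : ℕ) : SigmaFinite (volume : Measure (Fin m → EE)) := inferInstance
instance (m : ℕ) : BorelSpace (Fin m → EE) := Pi.borelSpace
instance (m : ℕ) : OpensMeasurableSpace (Fin m → EE) := Pi.opensMeasurableSpace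

lemma hs_cast {a : ℝ} {Λ : Set R3} {m1 m2 : ℕ} (h : m1 = m2) (v : Fin m2 → EE) :
    v ∈ HSGamma a Λ m2 ↔ v ∘ Fin.cast h ∈ HSGamma a Λ m1 := by subst h; exact Iff.rfl

lemma fam_cast (f : (m : ℕ) → (Fin m → EE) → ℝ) {m1 m2 : ℕ} (h : m1 = m2) (v : Fin m2 → EE) :
    f m1 (v ∘ Fin.cast h) = f m2 v := by subst h; rfl

lemma measurableSet_HSGamma (a : ℝ) {Λ : Set R3} (hΛo : IsOpen Λ) (m : ℕ) :
    MeasurableSet (HSGamma a Λ m) := by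
  have hrw : HSGamma a Λ m = {v : Fin m → EE | ∀ i, (v i).1 ∈ Λ} ∩
      ({v : Fin m → EE | ∀ i, ∀ q ∈ frontier Λ, a / 2 ≤ dist (v i).1 q} ∩
       {v : Fin m → EE | ∀ i j, i ≠ j → a ≤ dist (v i).1 (v j).1}) := by
    ext v; simp [HSGamma, Set.mem_setOf_eq, and_assoc]
  rw [hrw]
  refine MeasurableSet.inter ?_ (MeasurableSet.inter ?_ ?_)
  · rw [Set.setOf_forall]
    exact MeasurableSet.iInter fun i =>
      (measurable_fst.comp (measurable_pi_apply i)) hΛo.measurableSet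
  · refine IsClosed.measurableSet ?_
    rw [Set.setOf_forall]
    refine isClosed_iInter fun i => ?_
    rw [Set.setOf_forall]
    refine isClosed_iInter fun q => ?_
    rw [Set.setOf_forall]
    refine isClosed_iInter fun hq => ?_
    exact isClosed_le continuous_const (((continuous_apply i).fst).dist continuous_const)
  · refine IsClosed.measurableSet ?_
    rw [Set.setOf_forall]
    refine isClosed_iInter fun i => ?_
    rw [Set.setOf_forall]
    refine isClosed_iInter fun j => ?_
    by_cases hij : i = j
    · have : {v : Fin m → EE | i ≠ j → a ≤ dist (v i).1 (v j).1} = Set.univ :=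
        Set.eq_univ_of_forall fun v hne => absurd hij hne
      rw [this]; exact isClosed_univ
    · have : {v : Fin m → EE | i ≠ j → a ≤ dist (v i).1 (v j).1}
          = {v : Fin m → EE | a ≤ dist (v i).1 (v j).1} :=
        Set.ext fun v => ⟨fun h => h hij, fun h _ => h⟩
      rw [this]
      exact isClosed_le continuous_const
        (((continuous_apply i).fst).dist ((continuous_apply j).fst))

lemma measurable_append_left {n k : ℕ} (z : Fin n → EE) :
    Measurable fun (y : Fin k → EE) => Fin.append z y := by
  apply measurable_pi_lambda
  intro i
  refine Fin.addCases (fun i0 => ?_) (fun i0 => ?_) i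
  · simp only [Fin.append_left]; exact measurable_const
  · simp only [Fin.append_right]; exact measurable_pi_apply i0

lemma measurableSet_gammaExt {a : ℝ} {Λ : Set R3} (hΛo : IsOpen Λ) (n k : ℕ)
    (z : Fin n → EE) : MeasurableSet (gammaExt a Λ n k z) :=
  (measurable_append_left z) (measurableSet_HSGamma a hΛo (n + k))

lemma hs_append_restrict {a : ℝ} {Λ : Set R3} {M j : ℕ} {Z : Fin M → EE} {w : Fin j → EE}
    (h : Fin.append Z w ∈ HSGamma a Λ (M + j)) : Z ∈ HSGamma a Λ M := by
  obtain ⟨h1, h2, h3⟩ := h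
  refine ⟨fun i => ?_, fun i q hq => ?_, fun i i' hne => ?_⟩
  · have := h1 (Fin.castAdd j i); rwa [Fin.append_left] at this
  · have := h2 (Fin.castAdd j i) q hq; rwa [Fin.append_left] at this
  · have := h3 (Fin.castAdd j i) (Fin.castAdd j i')
      (fun hc => hne (Fin.castAdd_inj.mp hc))
    rwa [Fin.append_left, Fin.append_left] at this

lemma hs_eventually_empty {a : ℝ} (ha : 0 < a) {Λ : Set R3}
    (hΛb : Bornology.IsBounded Λ) :
    ∃ N : ℕ, ∀ m, N < m → HSGamma a Λ m = ∅ := by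
  classical
  have hcomp : IsCompact (closure Λ) :=
    Metric.isCompact_of_isClosed_isBounded isClosed_closure hΛb.closure
  obtain ⟨t, tsub, tfin, hcover⟩ := hcomp.finite_cover_balls (half_pos ha)
  refine ⟨tfin.toFinset.card, fun m hm => Set.eq_empty_iff_forall_notMem.2 fun v hv => ?_⟩
  have hch : ∀ i : Fin m, ∃ x ∈ tfin.toFinset, (v i).1 ∈ Metric.ball x (a / 2) := by
    intro i
    have h1 : (v i).1 ∈ closure Λ := subset_closure (hv.1 i)
    have h2 := hcover h1
    simp only [Set.mem_iUnion] at h2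
    obtain ⟨x, hx, hball⟩ := h2
    exact ⟨x, tfin.mem_toFinset.2 hx, hball⟩
  choose c hc hball using hch
  have hinj : Function.Injective c := by
    intro i j hij
    by_contra hne
    have hd := hv.2.2 i j hne
    have d1 : dist (v i).1 (c i) < a / 2 := Metric.mem_ball.1 (hball i)
    have d2 : dist (v j).1 (c j) < a / 2 := Metric.mem_ball.1 (hball j)
    have htri : dist (v i).1 (v j).1 ≤ dist (v i).1 (c i) + dist (c j) (v j).1 := by
      rw [hij]; exact dist_triangle _ _ _
    rw [dist_comm (c j)] at htri
    linarith
  have hcard : m ≤ tfin.toFinset.card := by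
    have h2 := Fintype.card_le_of_injective
      (fun i => (⟨c i, hc i⟩ : {x // x ∈ tfin.toFinset}))
      (fun i j h => hinj (congrArg Subtype.val h))
    simpa using h2
  omega



lemma maxw_nonneg {β : ℝ} (hβ : 0 < β) (p : R3) : 0 ≤ maxw β p := by
  unfold maxw
  have : (0:ℝ) < Real.pi := Real.pi_pos
  positivity

lemma integrable_maxw {β : ℝ} (hβ : 0 < β) : Integrable (maxw β) := by
  have hre : (0:ℝ) < ((β / 2 : ℂ)).re := by
    simp only [Complex.div_re]
    norm_num
    positivity
  have h0 := (GaussianFourier.integrable_cexp_neg_mul_sq_norm_add (V := R3) hre 0 (0 : R3)).norm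
  have heq : (fun a : R3 => ‖Complex.exp (-(β/2 : ℂ) * (‖a‖:ℂ)^2 + 0 * ((inner ℝ (0:R3) a : ℝ) : ℂ))‖)
      = fun v : R3 => Real.exp (-β * ‖v‖^2 / 2) := by
    funext v
    rw [zero_mul, add_zero, Complex.norm_exp]
    congr 1
    rw [← Complex.ofReal_pow, show -(β/2:ℂ) = ((-(β/2):ℝ):ℂ) by push_cast; ring,
      ← Complex.ofReal_mul, Complex.ofReal_re]
    ring
  rw [heq] at h0
  unfold maxw
  simpa using h0.const_mul ((β / (2 * Real.pi)) ^ ((3 : ℝ) / 2))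


def phiHS (β : ℝ) (Λ : Set R3) (x : EE) : ℝ :=
  Set.indicator Λ (fun _ => (1:ℝ)) x.1 * maxw β x.2

lemma phiHS_nonneg {β : ℝ} (hβ : 0 < β) (Λ : Set R3) (x : EE) : 0 ≤ phiHS β Λ x :=
  mul_nonneg (Set.indicator_nonneg (fun _ _ => zero_le_one) _) (maxw_nonneg hβ _)

lemma integrable_phiHS {β : ℝ} (hβ : 0 < β) {Λ : Set R3} (hΛo : IsOpen Λ)
    (hΛb : Bornology.IsBounded Λ) : Integrable (phiHS β Λ) := by
  have h1 : Integrable (Set.indicator Λ (fun _ => (1:ℝ))) := by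
    rw [integrable_indicator_iff hΛo.measurableSet]
    exact integrableOn_const hΛb.measure_lt_top.ne
  exact h1.mul_prod (integrable_maxw hβ)

lemma integrable_prod_phiHS {β : ℝ} (hβ : 0 < β) {Λ : Set R3} (hΛo : IsOpen Λ)
    (hΛb : Bornology.IsBounded Λ) (m : ℕ) :
    Integrable (fun u : Fin m → EE => ∏ i, phiHS β Λ (u i)) :=
  Integrable.fintype_prod (fun _ => integrable_phiHS hβ hΛo hΛb)

lemma hs_prod_bound {a : ℝ} {Λ : Set R3} {β C : ℝ} (hβ : 0 < β) {M k : ℕ}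
    {g : (Fin (M + k) → EE) → ℝ}
    (hgb : ∀ v ∈ HSGamma a Λ (M + k), |g v| ≤ C * ∏ i, maxw β (v i).2)
    (z : Fin M → EE) {y : Fin k → EE} (hy : y ∈ gammaExt a Λ M k z) :
    |g (Fin.append z y)| ≤ (C * ∏ i, maxw β (z i).2) * ∏ i, phiHS β Λ (y i) := by
  have h := hgb _ hy
  have hΛy : ∀ i, (y i).1 ∈ Λ := fun i => by
    have := hy.1 (Fin.natAdd M i); rwa [Fin.append_right] at this
  calc |g (Fin.append z y)| ≤ C * ∏ i, maxw β ((Fin.append z y i).2) := h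
    _ = (C * ∏ i, maxw β (z i).2) * ∏ i, maxw β ((y i).2) := by
        rw [Fin.prod_univ_add]
        simp only [Fin.append_left, Fin.append_right]
        ring
    _ = (C * ∏ i, maxw β (z i).2) * ∏ i, phiHS β Λ (y i) := by
        congr 1
        refine Finset.prod_congr rfl fun i _ => ?_
        rw [phiHS, Set.indicator_of_mem (hΛy i), one_mul]

lemma integrableOn_gammaExt {a : ℝ} {Λ : Set R3} {β : ℝ} (hβ : 0 < β) (hΛo : IsOpen Λ)
    (hΛb : Bornology.IsBounded Λ) {M k : ℕ} (z : Fin M → EE)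
    {g : (Fin (M + k) → EE) → ℝ} (hg : Measurable g) {C : ℝ}
    (hgb : ∀ v ∈ HSGamma a Λ (M + k), |g v| ≤ C * ∏ i, maxw β (v i).2) :
    IntegrableOn (fun y => g (Fin.append z y)) (gammaExt a Λ M k z) := by
  refine Integrable.mono'
    (((integrable_prod_phiHS hβ hΛo hΛb k).const_mul (C * ∏ i, maxw β (z i).2)).integrableOn)
    ((hg.comp (measurable_append_left z)).aestronglyMeasurable.restrict) ?_
  rw [ae_restrict_iff' (measurableSet_gammaExt hΛo M k z)]
  filter_upwards with y hy
  rw [Real.norm_eq_abs]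
  exact hs_prod_bound hβ hgb z hy


def prodAppendME (k j : ℕ) : ((Fin k → EE) × (Fin j → EE)) ≃ᵐ (Fin (k + j) → EE) :=
  (MeasurableEquiv.sumPiEquivProdPi (fun _ : Fin k ⊕ Fin j => EE)).symm.trans
    (MeasurableEquiv.piCongrLeft (fun _ => EE) finSumFinEquiv)

lemma prodAppendME_apply (k j : ℕ) (p : (Fin k → EE) × (Fin j → EE)) :
    prodAppendME k j p = Fin.append p.1 p.2 := by
  funext i
  refine Fin.addCases (fun i0 => ?_) (fun i0 => ?_) i
  · rw [Fin.append_left]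
    have h1 : Fin.castAdd j i0 = finSumFinEquiv (Sum.inl i0) := rfl
    rw [prodAppendME, MeasurableEquiv.trans_apply, h1,
      MeasurableEquiv.piCongrLeft_apply_apply]
    rfl
  · rw [Fin.append_right]
    have h1 : Fin.natAdd k i0 = finSumFinEquiv (Sum.inr i0) := rfl
    rw [prodAppendME, MeasurableEquiv.trans_apply, h1,
      MeasurableEquiv.piCongrLeft_apply_apply]
    rfl

instance (k j : ℕ) : MeasureSpace ((Fin k → EE) × (Fin j → EE)) := Measure.prod.measureSpace

lemma prodAppendME_measurePreserving (k j : ℕ) :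
    MeasurePreserving (prodAppendME k j) volume volume := by
  haveI h : SigmaFinite (volume : Measure EE) := inferInstance
  haveI : ∀ i : Fin (k + j), SigmaFinite (volume : Measure EE) := fun _ => h
  exact (volume_measurePreserving_piCongrLeft (fun _ : Fin (k+j) => EE) finSumFinEquiv).comp
    (volume_measurePreserving_sumPiEquivProdPi_symm (fun _ : Fin k ⊕ Fin j => EE))


lemma mem_split {a : ℝ} {Λ : Set R3} {n k j : ℕ} (z : Fin n → EE) (y : Fin k → EE)
    (w : Fin j → EE) :
    Fin.append z (Fin.append y w) ∈ HSGamma a Λ (n + (k + j)) ↔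
      (y ∈ gammaExt a Λ n k z ∧ w ∈ gammaExt a Λ (n + k) j (Fin.append z y)) := by
  have h1 : (Fin.append z (Fin.append y w) ∈ HSGamma a Λ (n + (k + j))) ↔
      (Fin.append (Fin.append z y) w ∈ HSGamma a Λ (n + k + j)) := by
    rw [Fin.append_assoc]
    exact hs_cast (Nat.add_assoc n k j) _
  rw [h1]
  constructor
  · intro h
    exact ⟨hs_append_restrict h, h⟩
  · rintro ⟨-, h⟩
    exact h

lemma fubini_key {a β A : ℝ} (hβ : 0 < β) (hA : 0 ≤ A) {Λ : Set R3} (hΛo : IsOpen Λ)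
    (hΛb : Bornology.IsBounded Λ) {n k j : ℕ} (z : Fin n → EE)
    {g : (Fin (n + (k + j)) → EE) → ℝ} (hg : Measurable g)
    (hgb : ∀ v ∈ HSGamma a Λ (n + (k + j)), |g v| ≤ A * ∏ i, maxw β (v i).2) :
    IntegrableOn (fun y => ∫ w in gammaExt a Λ (n + k) j (Fin.append z y),
        g (Fin.append z (Fin.append y w))) (gammaExt a Λ n k z) ∧
    ∫ y in gammaExt a Λ n k z, ∫ w in gammaExt a Λ (n + k) j (Fin.append z y),
        g (Fin.append z (Fin.append y w))
      = ∫ u in gammaExt a Λ n (k + j) z, g (Fin.append z u) := by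
  classical
  set S := gammaExt a Λ n (k + j) z with hS
  set ψ := prodAppendME k j with hψdef
  have hψ := prodAppendME_measurePreserving k j
  set T : Set ((Fin k → EE) × (Fin j → EE)) := ψ ⁻¹' S with hTdef
  have hSmeas : MeasurableSet S := measurableSet_gammaExt hΛo n (k + j) z
  have hTmeas : MeasurableSet T := ψ.measurable hSmeas
  have hmemT : ∀ p : (Fin k → EE) × (Fin j → EE),
      p ∈ T ↔ (p.1 ∈ gammaExt a Λ n k z ∧
        p.2 ∈ gammaExt a Λ (n + k) j (Fin.append z p.1)) := by
    intro p
    rw [hTdef, Set.mem_preimage, show ψ p = Fin.append p.1 p.2 from prodAppendME_apply k j p]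
    exact mem_split z p.1 p.2
  set F : ((Fin k → EE) × (Fin j → EE)) → ℝ :=
    fun p => g (Fin.append z (Fin.append p.1 p.2)) with hF
  have hFmeas : Measurable F := by
    have hc : (fun p : (Fin k → EE) × (Fin j → EE) => Fin.append p.1 p.2) = ⇑ψ :=
      funext fun p => (prodAppendME_apply k j p).symm
    have hmm : Measurable fun p : (Fin k → EE) × (Fin j → EE) =>
        Fin.append z (Fin.append p.1 p.2) := by
      rw [show (fun p : (Fin k → EE) × (Fin j → EE) => Fin.append z (Fin.append p.1 p.2))
          = (fun u => Fin.append z u) ∘ (fun p : (Fin k → EE) × (Fin j → EE) =>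
              Fin.append p.1 p.2) from rfl, hc]
      exact (measurable_append_left z).comp ψ.measurable
    exact hg.comp hmm
  set D : ((Fin k → EE) × (Fin j → EE)) → ℝ := fun p =>
    ((A * ∏ i, maxw β (z i).2) * ∏ i, phiHS β Λ (p.1 i)) * ∏ i, phiHS β Λ (p.2 i) with hD
  have hDint : Integrable D :=
    ((integrable_prod_phiHS hβ hΛo hΛb k).const_mul _).mul_prod
      (integrable_prod_phiHS hβ hΛo hΛb j)
  have hbound : ∀ p, ‖T.indicator F p‖ ≤ D p := by
    intro p
    by_cases hp : p ∈ T
    · rw [Set.indicator_of_mem hp, Real.norm_eq_abs]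
      have hu : Fin.append p.1 p.2 ∈ gammaExt a Λ n (k + j) z := by
        rw [hTdef, Set.mem_preimage,
          show ψ p = Fin.append p.1 p.2 from prodAppendME_apply k j p] at hp
        exact hp
      have hb := hs_prod_bound hβ hgb z hu
      refine hb.trans (le_of_eq ?_)
      rw [hD]
      rw [Fin.prod_univ_add]
      simp only [Fin.append_left, Fin.append_right]
      ring
    · rw [Set.indicator_of_notMem hp, norm_zero, hD]
      have hphi1 : (0:ℝ) ≤ ∏ i, phiHS β Λ (p.1 i) :=
        Finset.prod_nonneg fun i _ => phiHS_nonneg hβ _ _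
      have hphi2 : (0:ℝ) ≤ ∏ i, phiHS β Λ (p.2 i) :=
        Finset.prod_nonneg fun i _ => phiHS_nonneg hβ _ _
      have hmz : (0:ℝ) ≤ A * ∏ i, maxw β (z i).2 :=
        mul_nonneg hA (Finset.prod_nonneg fun i _ => maxw_nonneg hβ _)
      exact mul_nonneg (mul_nonneg hmz hphi1) hphi2
  have hTind : Integrable (T.indicator F) :=
    Integrable.mono' hDint ((hFmeas.indicator hTmeas).aestronglyMeasurable)
      (Filter.Eventually.of_forall hbound)
  set I1 : (Fin k → EE) → ℝ := fun x => ∫ w in gammaExt a Λ (n + k) j (Fin.append z x),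
    g (Fin.append z (Fin.append x w)) with hI1
  have hsec : ∀ x, ∫ w, T.indicator F (x, w) = (gammaExt a Λ n k z).indicator I1 x := by
    intro x
    by_cases hx : x ∈ gammaExt a Λ n k z
    · rw [Set.indicator_of_mem hx, hI1]
      have hfw : (fun w => T.indicator F (x, w))
          = (gammaExt a Λ (n + k) j (Fin.append z x)).indicator
              (fun w => g (Fin.append z (Fin.append x w))) := by
        funext w
        by_cases hw : w ∈ gammaExt a Λ (n + k) j (Fin.append z x)
        · rw [Set.indicator_of_mem hw, Set.indicator_of_mem ((hmemT (x, w)).2 ⟨hx, hw⟩)]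
        · rw [Set.indicator_of_notMem hw,
            Set.indicator_of_notMem (fun hmem => hw ((hmemT (x, w)).1 hmem).2)]
      rw [hfw, integral_indicator (measurableSet_gammaExt hΛo (n + k) j _)]
    · rw [Set.indicator_of_notMem hx]
      have hfw : (fun w => T.indicator F (x, w)) = fun _ => (0:ℝ) :=
        funext fun w => Set.indicator_of_notMem
          (fun hmem => hx ((hmemT (x, w)).1 hmem).1) _
      rw [hfw, integral_zero]
  have hIint : Integrable (fun x => ∫ w, T.indicator F (x, w)) := hTind.integral_prod_left
  have hIOn : IntegrableOn I1 (gammaExt a Λ n k z) := by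
    have heq : (fun x => ∫ w, T.indicator F (x, w))
        = (gammaExt a Λ n k z).indicator I1 := funext hsec
    rw [heq] at hIint
    exact (integrable_indicator_iff (measurableSet_gammaExt hΛo n k z)).1 hIint
  have e1 : ∫ p in T, F p = ∫ u in S, g (Fin.append z u) := by
    rw [hTdef, hψdef, hF, hS]
    calc ∫ p in ⇑(prodAppendME k j) ⁻¹' gammaExt a Λ n (k + j) z,
          g (Fin.append z (Fin.append p.1 p.2))
        = ∫ p in ⇑(prodAppendME k j) ⁻¹' gammaExt a Λ n (k + j) z,
          g (Fin.append z (prodAppendME k j p)) := by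
          refine integral_congr_ae (Filter.Eventually.of_forall fun p => ?_)
          show g (Fin.append z (Fin.append p.1 p.2)) = g (Fin.append z (prodAppendME k j p))
          rw [prodAppendME_apply]
      _ = _ := (prodAppendME_measurePreserving k j).setIntegral_preimage_emb
            (MeasurableEquiv.measurableEmbedding _) (fun u => g (Fin.append z u))
            (gammaExt a Λ n (k + j) z)
  have e2 : ∫ p in T, F p = ∫ x, ∫ w, T.indicator F (x, w) := by
    rw [← integral_indicator hTmeas]
    exact integral_prod _ hTind
  have e3 : ∫ x, ∫ w, T.indicator F (x, w) = ∫ x in gammaExt a Λ n k z, I1 x := by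
    rw [funext hsec, integral_indicator (measurableSet_gammaExt hΛo n k z)]
  exact ⟨hIOn, by rw [show (∫ y in gammaExt a Λ n k z, I1 y) = _ from e3.symm.trans (e2.symm.trans e1)]⟩


lemma gammaExt_zero {a : ℝ} {Λ : Set R3} {n : ℕ} (z : Fin n → EE)
    (hz : z ∈ HSGamma a Λ n) : gammaExt a Λ n 0 z = Set.univ := by
  refine Set.eq_univ_of_forall fun y => ?_
  show Fin.append z y ∈ HSGamma a Λ (n + 0)
  rw [show y = Fin.elim0 from funext fun i => i.elim0, Fin.append_elim0]
  exact (hs_cast (Nat.add_zero n) z).1 hz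

lemma coeff_alt (m : ℕ) :
    ∑ k ∈ Finset.range (m + 1),
      ((-1:ℝ) ^ k / (k.factorial : ℝ)) * (((m - k).factorial : ℝ))⁻¹
      = if m = 0 then 1 else 0 := by
  have key := Int.alternating_sum_range_choose (n := m)
  have keyR : ∑ k ∈ Finset.range (m + 1), ((-1:ℝ) ^ k * (m.choose k : ℝ))
      = if m = 0 then 1 else 0 := by
    have h2 := congrArg (fun z : ℤ => (z : ℝ)) key
    push_cast at h2
    convert h2 using 2
  have hterm : ∀ k ∈ Finset.range (m + 1),
      ((-1:ℝ) ^ k / (k.factorial : ℝ)) * (((m - k).factorial : ℝ))⁻¹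
      = ((-1:ℝ) ^ k * (m.choose k : ℝ)) / (m.factorial : ℝ) := by
    intro k hk
    have hkm : k ≤ m := Nat.lt_succ_iff.mp (Finset.mem_range.mp hk)
    have hfac : ((m.choose k : ℝ)) * (k.factorial : ℝ) * (((m - k).factorial : ℝ))
        = (m.factorial : ℝ) := by
      exact_mod_cast congrArg (Nat.cast (R := ℝ))
        (Nat.choose_mul_factorial_mul_factorial hkm)
    have hk0 : (k.factorial : ℝ) ≠ 0 := Nat.cast_ne_zero.2 k.factorial_ne_zero
    have hmk0 : (((m - k).factorial : ℝ)) ≠ 0 := Nat.cast_ne_zero.2 (m - k).factorial_ne_zero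
    have hch : ((m.choose k : ℝ)) ≠ 0 := Nat.cast_ne_zero.2 (Nat.choose_pos hkm).ne'
    rw [← hfac]
    field_simp
  rw [Finset.sum_congr rfl hterm, ← Finset.sum_div, keyR]
  by_cases hm : m = 0 <;> simp [hm]


/-- Inversion of the correlation-function map: for every `n` and `z_n ∈ Γ_n` the series
`Σ_k ((−1)^k/k!) ∫_{Γ_k(z_n)} ρ_{n+k}(z_n, y) dy` converges absolutely and equals
`f_n(z_n)`. -/
theorem stmt5 (a : ℝ) (ha : 0 < a) (Λ : Set R3) (hΛo : IsOpen Λ)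
    (hΛb : Bornology.IsBounded Λ)
    (f : (m : ℕ) → (Fin m → R3 × R3) → ℝ) (hf : ∀ m, Measurable (f m))
    (A β : ℝ) (hA : 0 < A) (hβ : 0 < β)
    (hbound : ∀ m, ∀ w ∈ HSGamma a Λ m, |f m w| ≤ A * ∏ j, maxw β (w j).2)
    (n : ℕ) (z : Fin n → R3 × R3) (hz : z ∈ HSGamma a Λ n) :
    Summable (fun k : ℕ => (k.factorial : ℝ)⁻¹ *
      ∫ y in gammaExt a Λ n k z, |corrGC a Λ f (n + k) (Fin.append z y)|) ∧
    (∑' k : ℕ, ((-1 : ℝ) ^ k / (k.factorial : ℝ)) *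
      ∫ y in gammaExt a Λ n k z, corrGC a Λ f (n + k) (Fin.append z y)) = f n z := by
  classical
  obtain ⟨N, hN⟩ := hs_eventually_empty ha hΛb
  set K := N + 1 with hK
  have hge : ∀ (M k : ℕ) (Z : Fin M → EE), N < M + k → gammaExt a Λ M k Z = ∅ := by
    intro M k Z h
    refine Set.eq_empty_iff_forall_notMem.2 fun y hy => ?_
    have hy' : Fin.append Z y ∈ HSGamma a Λ (M + k) := hy
    rw [hN (M + k) h] at hy'
    exact hy'
  have hzero : ∀ k, K ≤ k → gammaExt a Λ n k z = ∅ := fun k hk => hge n k z (by omega)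
  constructor
  · refine summable_of_ne_finset_zero (s := Finset.range K) fun k hk => ?_
    have hk' : K ≤ k := Nat.le_of_not_lt fun h => hk (Finset.mem_range.2 h)
    rw [hzero k hk', setIntegral_empty, mul_zero]
  · have hcorr : ∀ (M : ℕ) (Z : Fin M → EE), corrGC a Λ f M Z
        = ∑ j ∈ Finset.range K, ((j.factorial : ℝ)⁻¹ *
            ∫ w in gammaExt a Λ M j Z, f (M + j) (Fin.append Z w)) := by
      intro M Z
      refine tsum_eq_sum fun j hj => ?_
      have hj' : K ≤ j := Nat.le_of_not_lt fun h => hj (Finset.mem_range.2 h)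
      rw [hge M j Z (by omega), setIntegral_empty, mul_zero]
    rw [tsum_eq_sum (s := Finset.range K) (fun k hk => by
      have hk' : K ≤ k := Nat.le_of_not_lt fun h => hk (Finset.mem_range.2 h)
      rw [hzero k hk', setIntegral_empty, mul_zero])]
    set J : ℕ → ℝ := fun m => ∫ u in gammaExt a Λ n m z, f (n + m) (Fin.append z u) with hJ
    have hJ0 : ∀ m, K ≤ m → J m = 0 := by
      intro m hm
      rw [hJ]
      simp only
      rw [hge n m z (by omega), setIntegral_empty]
    have hJfnz : J 0 = f n z := by
      rw [hJ]
      simp only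
      have h1 : ∀ u : Fin 0 → EE, f (n + 0) (Fin.append z u) = f n z := by
        intro u
        rw [show u = Fin.elim0 from funext fun i => i.elim0, Fin.append_elim0]
        exact fam_cast f (Nat.add_zero n) z
      calc (∫ u in gammaExt a Λ n 0 z, f (n + 0) (Fin.append z u))
          = ∫ _u in gammaExt a Λ n 0 z, f n z :=
            integral_congr_ae (Filter.Eventually.of_forall fun u => h1 u)
        _ = f n z := by
            rw [gammaExt_zero z hz, Measure.restrict_univ, integral_const]
            have hμ : (volume : Measure (Fin 0 → EE)) Set.univ = 1 := by
              rw [volume_pi, Measure.pi_univ]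
              simp
            rw [measureReal_def, hμ]
            simp
    have hks : ∀ k ∈ Finset.range K, ((-1:ℝ) ^ k / (k.factorial : ℝ)) *
        (∫ y in gammaExt a Λ n k z, corrGC a Λ f (n + k) (Fin.append z y))
        = ∑ j ∈ Finset.range K,
            ((-1:ℝ) ^ k / (k.factorial : ℝ)) * ((j.factorial : ℝ)⁻¹ * J (k + j)) := by
      intro k _hk
      have hinner : ∀ y : Fin k → EE, corrGC a Λ f (n + k) (Fin.append z y)
          = ∑ j ∈ Finset.range K, ((j.factorial : ℝ)⁻¹ *
              ∫ w in gammaExt a Λ (n + k) j (Fin.append z y),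
                f (n + (k + j)) (Fin.append z (Fin.append y w))) := by
        intro y
        rw [hcorr (n + k) (Fin.append z y)]
        refine Finset.sum_congr rfl fun j _ => ?_
        congr 1
        refine integral_congr_ae (Filter.Eventually.of_forall fun w => ?_)
        show f (n + k + j) (Fin.append (Fin.append z y) w)
            = f (n + (k + j)) (Fin.append z (Fin.append y w))
        rw [Fin.append_assoc]
        exact fam_cast f (Nat.add_assoc n k j) _
      have hfub : ∀ j : ℕ,
          IntegrableOn (fun y => ∫ w in gammaExt a Λ (n + k) j (Fin.append z y),
            f (n + (k + j)) (Fin.append z (Fin.append y w))) (gammaExt a Λ n k z) ∧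
          (∫ y in gammaExt a Λ n k z, ∫ w in gammaExt a Λ (n + k) j (Fin.append z y),
            f (n + (k + j)) (Fin.append z (Fin.append y w)))
            = ∫ u in gammaExt a Λ n (k + j) z, f (n + (k + j)) (Fin.append z u) :=
        fun j => fubini_key hβ hA.le hΛo hΛb z (hf (n + (k + j))) (hbound (n + (k + j)))
      calc ((-1:ℝ) ^ k / (k.factorial : ℝ)) *
            (∫ y in gammaExt a Λ n k z, corrGC a Λ f (n + k) (Fin.append z y))
          = ((-1:ℝ) ^ k / (k.factorial : ℝ)) *
            ∫ y in gammaExt a Λ n k z, ∑ j ∈ Finset.range K,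
              ((j.factorial : ℝ)⁻¹ * ∫ w in gammaExt a Λ (n + k) j (Fin.append z y),
                f (n + (k + j)) (Fin.append z (Fin.append y w))) := by
            congr 1
            exact integral_congr_ae (Filter.Eventually.of_forall fun y => hinner y)
        _ = ((-1:ℝ) ^ k / (k.factorial : ℝ)) * ∑ j ∈ Finset.range K,
              ∫ y in gammaExt a Λ n k z,
                ((j.factorial : ℝ)⁻¹ * ∫ w in gammaExt a Λ (n + k) j (Fin.append z y),
                  f (n + (k + j)) (Fin.append z (Fin.append y w))) := by
            congr 1
            exact integral_finset_sum _ fun j _ => ((hfub j).1.const_mul _)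
        _ = ∑ j ∈ Finset.range K,
              ((-1:ℝ) ^ k / (k.factorial : ℝ)) * ((j.factorial : ℝ)⁻¹ * J (k + j)) := by
            rw [Finset.mul_sum]
            refine Finset.sum_congr rfl fun j _ => ?_
            congr 1
            rw [integral_const_mul, (hfub j).2, hJ]
    rw [Finset.sum_congr rfl hks]
    have hA1 : ∀ k ∈ Finset.range K, ∑ j ∈ Finset.range K,
        ((-1:ℝ) ^ k / (k.factorial : ℝ)) * ((j.factorial : ℝ)⁻¹ * J (k + j))
        = ∑ j ∈ Finset.range (K - k),
        ((-1:ℝ) ^ k / (k.factorial : ℝ)) * ((j.factorial : ℝ)⁻¹ * J (k + j)) := by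
      intro k hk
      have hkK : k < K := Finset.mem_range.1 hk
      refine (Finset.sum_subset (Finset.range_subset_range.2 (by omega)) fun j hjK hjn => ?_).symm
      have hj2 : K - k ≤ j := Nat.le_of_not_lt fun h => hjn (Finset.mem_range.2 h)
      rw [hJ0 (k + j) (by omega), mul_zero, mul_zero]
    rw [Finset.sum_congr rfl hA1]
    have flip := Finset.sum_range_diag_flip K
      (fun k j => ((-1:ℝ) ^ k / (k.factorial : ℝ)) * ((j.factorial : ℝ)⁻¹ * J (k + j)))
    rw [← flip]
    have hdiag : ∀ m ∈ Finset.range K, ∑ k ∈ Finset.range (m + 1),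
        ((-1:ℝ) ^ k / (k.factorial : ℝ)) * (((m - k).factorial : ℝ)⁻¹ * J (k + (m - k)))
        = (if m = 0 then (1:ℝ) else 0) * J m := by
      intro m _hm
      have hterm : ∀ k ∈ Finset.range (m + 1),
          ((-1:ℝ) ^ k / (k.factorial : ℝ)) * (((m - k).factorial : ℝ)⁻¹ * J (k + (m - k)))
          = (((-1:ℝ) ^ k / (k.factorial : ℝ)) * (((m - k).factorial : ℝ))⁻¹) * J m := by
        intro k hk
        have hkm : k ≤ m := Nat.lt_succ_iff.1 (Finset.mem_range.1 hk)
        rw [Nat.add_sub_cancel' hkm]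
        ring
      rw [Finset.sum_congr rfl hterm, ← Finset.sum_mul, coeff_alt m]
    rw [Finset.sum_congr rfl hdiag]
    rw [Finset.sum_eq_single_of_mem 0 (Finset.mem_range.2 (by omega))
      (fun b _ hb => by simp [hb])]
    simpa using hJfnz

end
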